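/- Let q = 2h+3 with h ≥ 0 an integer. For every integer a_0, every n ≥ 0 and all nonzero integers a_1, …, a_n, the two points of ℝ ∪ {∞} given by T^{a_0} S T^{a_1} ⋯ S T^{a_n} (S T)^{h} (S T^{2}) (S T)^{h} · 0 and T^{a_0} S T^{a_1} ⋯ S T^{a_n − 1} (S T^{−1})^{h} (S T^{−2}) (S T^{−1})^{h} · 0 coincide; equivalently, the corresponding SL(2,ℝ) matrices have proportional second columns. In the language of λ_q-continued fractions this says [a_0; a_1, …, a_n, 1^{h}, 2, 1^{h}] = [a_0; a_1, …, a_n − 1, (−1)^{h}, −2, (−1)^{h}]. -/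

import Mathlib

/-- `λ_q = 2 cos (π / q)`. -/
noncomputable def lam (q : ℕ) : ℝ := 2 * Real.cos (Real.pi / (q : ℝ))

/-- The matrix `S = [[0,-1],[1,0]]`. -/
def Smat : Matrix (Fin 2) (Fin 2) ℝ := !![0, -1; 1, 0]

/-- The matrix `T^a = [[1, a·λ_q],[0,1]]`. -/
noncomputable def Tmat (q : ℕ) (a : ℤ) : Matrix (Fin 2) (Fin 2) ℝ :=
  !![1, (a : ℝ) * lam q; 0, 1]

/-- The word `T^{a_0} S T^{a_1} ⋯ S T^{a_n}`, where `a : Fin (n+1) → ℤ`. -/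
noncomputable def cfWord (q : ℕ) {n : ℕ} (a : Fin (n + 1) → ℤ) :
    Matrix (Fin 2) (Fin 2) ℝ :=
  Tmat q (a 0) * (List.ofFn (fun i : Fin n => Smat * Tmat q (a i.succ))).prod

lemma Tmat_mul (q : ℕ) (x y : ℤ) : Tmat q x * Tmat q y = Tmat q (x + y) := by
  unfold Tmat
  ext i j
  fin_cases i <;> fin_cases j <;>
    simp [Matrix.mul_apply, Fin.sum_univ_two]
  push_cast; ring

lemma cfWord_update_last (q : ℕ) (n : ℕ) (a : Fin (n + 1) → ℤ) :
    cfWord q (Function.update a (Fin.last n) (a (Fin.last n) - 1)) =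
      cfWord q a * Tmat q (-1) := by
  unfold cfWord
  cases n with
  | zero =>
      simp only [List.ofFn_zero, List.prod_nil, mul_one]
      rw [show (Fin.last 0) = 0 from rfl, Function.update_self,
        show a 0 - 1 = a 0 + (-1) by ring, ← Tmat_mul]
  | succ n =>
      rw [List.ofFn_succ', List.ofFn_succ']
      simp only [List.concat_eq_append, List.prod_append, List.prod_cons, List.prod_nil,
        mul_one]
      have h0 : Function.update a (Fin.last (n+1)) (a (Fin.last (n+1)) - 1) 0 = a 0 := by
        apply Function.update_of_ne
        simp [Fin.ext_iff]
      have hcast : ∀ i : Fin n,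
          Function.update a (Fin.last (n+1)) (a (Fin.last (n+1)) - 1) (i.castSucc.succ)
            = a (i.castSucc.succ) := by
        intro i
        apply Function.update_of_ne
        rw [Fin.succ_castSucc]
        exact Fin.castSucc_lt_last _ |>.ne
      have hlast : Function.update a (Fin.last (n+1)) (a (Fin.last (n+1)) - 1)
          ((Fin.last n).succ) = a (Fin.last (n+1)) - 1 := by
        rw [Fin.succ_last]
        exact Function.update_self _ _ _
      simp only [h0, hlast]
      have : (List.ofFn fun i : Fin n => Smat * Tmat q
          (Function.update a (Fin.last (n+1)) (a (Fin.last (n+1)) - 1) i.castSucc.succ))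
          = List.ofFn fun i : Fin n => Smat * Tmat q (a i.castSucc.succ) := by
        congr 1
        funext i
        rw [hcast]
      rw [this, show a (Fin.last (n+1)) - 1 = a (Fin.last (n+1)) + (-1) by ring,
        ← Tmat_mul]
      noncomm_ring

lemma R_pow (θ : ℝ) (k : ℕ) :
    Real.sin θ • (!![0, -1; 1, 2 * Real.cos θ] : Matrix (Fin 2) (Fin 2) ℝ) ^ k =
      !![-Real.sin (((k : ℝ) - 1) * θ), -Real.sin ((k : ℝ) * θ);
         Real.sin ((k : ℝ) * θ), Real.sin (((k : ℝ) + 1) * θ)] := by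
  induction k with
  | zero =>
      ext i j
      fin_cases i <;> fin_cases j <;>
        norm_num [Matrix.one_apply, Real.sin_neg, neg_one_mul]
  | succ k ih =>
      rw [pow_succ, ← Matrix.smul_mul, ih]
      ext i j
      fin_cases i <;> fin_cases j <;>
        · push_cast
          simp only [Matrix.mul_apply, Fin.sum_univ_two, Matrix.cons_val', Matrix.cons_val_zero,
            Matrix.cons_val_one, Matrix.head_cons, Matrix.head_fin_const, Matrix.empty_val',
            Matrix.cons_val_fin_one, Matrix.of_apply, sub_mul, add_mul, one_mul,
            Real.sin_add, Real.sin_sub, Real.cos_add]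
          first
            | ring1
            | linear_combination Real.sin ((k : ℝ) * θ) * Real.sin_sq_add_cos_sq θ
            | linear_combination (-Real.sin ((k : ℝ) * θ)) * Real.sin_sq_add_cos_sq θ

lemma R'_pow (θ : ℝ) (k : ℕ) :
    Real.sin θ • (!![0, -1; 1, -(2 * Real.cos θ)] : Matrix (Fin 2) (Fin 2) ℝ) ^ k =
      ((-1 : ℝ) ^ k) •
      !![-Real.sin (((k : ℝ) - 1) * θ), Real.sin ((k : ℝ) * θ);
         -Real.sin ((k : ℝ) * θ), Real.sin (((k : ℝ) + 1) * θ)] := by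
  induction k with
  | zero =>
      ext i j
      fin_cases i <;> fin_cases j <;>
        norm_num [Matrix.one_apply, Real.sin_neg, neg_one_mul]
  | succ k ih =>
      rw [pow_succ, ← Matrix.smul_mul, ih]
      ext i j
      fin_cases i <;> fin_cases j <;>
        · push_cast
          simp only [Matrix.mul_apply, Fin.sum_univ_two, Matrix.cons_val', Matrix.cons_val_zero,
            Matrix.cons_val_one, Matrix.head_cons, Matrix.head_fin_const, Matrix.empty_val',
            Matrix.cons_val_fin_one, Matrix.of_apply, Matrix.smul_apply, smul_eq_mul,
            sub_mul, add_mul, one_mul,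
            Real.sin_add, Real.sin_sub, Real.cos_add]
          first
            | ring1
            | linear_combination ((-1 : ℝ) ^ k * Real.sin ((k : ℝ) * θ)) * Real.sin_sq_add_cos_sq θ
            | linear_combination (-((-1 : ℝ) ^ k) * Real.sin ((k : ℝ) * θ)) * Real.sin_sq_add_cos_sq θ

lemma key (h : ℕ) (i : Fin 2) :
    ((Smat * Tmat (2*h+3) 1) ^ h * (Smat * Tmat (2*h+3) 2) * (Smat * Tmat (2*h+3) 1) ^ h) i 1 =
      -((Tmat (2*h+3) (-1) * ((Smat * Tmat (2*h+3) (-1)) ^ h * (Smat * Tmat (2*h+3) (-2)) *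
          (Smat * Tmat (2*h+3) (-1)) ^ h)) i 1) := by
  set θ : ℝ := Real.pi / ((2*h+3 : ℕ) : ℝ) with hθ
  have hq3 : ((2*h+3 : ℕ) : ℝ) = 2*(h:ℝ)+3 := by push_cast; ring
  have hqpos : (0:ℝ) < 2*(h:ℝ)+3 := by positivity
  have hθpos : 0 < θ := by
    rw [hθ, hq3]; positivity
  have hθlt : θ < Real.pi := by
    rw [hθ, hq3]
    rw [div_lt_iff₀ hqpos]
    nlinarith [Real.pi_pos]
  have hs : Real.sin θ ≠ 0 := ne_of_gt (Real.sin_pos_of_pos_of_lt_pi hθpos hθlt)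
  have hπ : (2*(h:ℝ)+3) * θ = Real.pi := by
    rw [hθ, hq3]; field_simp
  have hkey : Real.sin (((h:ℝ)+2)*θ) = Real.sin (((h:ℝ)+1)*θ) := by
    rw [show ((h:ℝ)+2)*θ = Real.pi - ((h:ℝ)+1)*θ by rw [← hπ]; ring]
    exact Real.sin_pi_sub _
  have hrec : 2 * Real.cos θ * Real.sin (((h:ℝ)+1)*θ) =
      Real.sin ((h:ℝ)*θ) + Real.sin (((h:ℝ)+2)*θ) := by
    rw [show ((h:ℝ))*θ = ((h:ℝ)+1)*θ - θ by ring,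
        show ((h:ℝ)+2)*θ = ((h:ℝ)+1)*θ + θ by ring,
        Real.sin_add, Real.sin_sub]
    ring
  -- concrete matrices
  have hlam : lam (2*h+3) = 2 * Real.cos θ := by rw [lam, hθ]
  have hR : Smat * Tmat (2*h+3) 1 = !![0, -1; 1, 2*Real.cos θ] := by
    rw [Smat, Tmat, hlam]
    ext i j; fin_cases i <;> fin_cases j <;>
      simp [Matrix.mul_apply, Fin.sum_univ_two]
  have hR' : Smat * Tmat (2*h+3) (-1) = !![0, -1; 1, -(2*Real.cos θ)] := by
    rw [Smat, Tmat, hlam]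
    ext i j; fin_cases i <;> fin_cases j <;>
      simp [Matrix.mul_apply, Fin.sum_univ_two]
  have hT1 : Tmat (2*h+3) 1 = !![1, 2*Real.cos θ; 0, 1] := by
    rw [Tmat, hlam]; norm_num
  have hTm1 : Tmat (2*h+3) (-1) = !![1, -(2*Real.cos θ); 0, 1] := by
    rw [Tmat, hlam]; norm_num
  have hT2 : Tmat (2*h+3) 2 = Tmat (2*h+3) 1 * Tmat (2*h+3) 1 := by
    rw [Tmat_mul]; norm_num
  have hTm2 : Tmat (2*h+3) (-2) = Tmat (2*h+3) (-1) * Tmat (2*h+3) (-1) := by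
    rw [Tmat_mul]; norm_num
  -- restructure LHS word
  have hL : (Smat * Tmat (2*h+3) 1) ^ h * (Smat * Tmat (2*h+3) 2) *
      (Smat * Tmat (2*h+3) 1) ^ h =
      (Smat * Tmat (2*h+3) 1) ^ (h+1) * (Tmat (2*h+3) 1 * (Smat * Tmat (2*h+3) 1) ^ h) := by
    rw [hT2, pow_succ]
    rw [show Smat * (Tmat (2*h+3) 1 * Tmat (2*h+3) 1)
        = (Smat * Tmat (2*h+3) 1) * Tmat (2*h+3) 1 from (mul_assoc _ _ _).symm]
    noncomm_ring
  have hX : Tmat (2*h+3) (-1) * ((Smat * Tmat (2*h+3) (-1)) ^ h * (Smat * Tmat (2*h+3) (-2)) *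
      (Smat * Tmat (2*h+3) (-1)) ^ h) =
      Tmat (2*h+3) (-1) * ((Smat * Tmat (2*h+3) (-1)) ^ (h+1) *
        (Tmat (2*h+3) (-1) * (Smat * Tmat (2*h+3) (-1)) ^ h)) := by
    rw [hTm2, pow_succ]
    rw [show Smat * (Tmat (2*h+3) (-1) * Tmat (2*h+3) (-1))
        = (Smat * Tmat (2*h+3) (-1)) * Tmat (2*h+3) (-1) from (mul_assoc _ _ _).symm]
    noncomm_ring
  rw [hL, hX, hR, hR', hTm1, hT1]
  have p1 : (!![0, -1; 1, 2*Real.cos θ] : Matrix (Fin 2) (Fin 2) ℝ) ^ (h+1)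
      = (Real.sin θ)⁻¹ • !![-Real.sin ((((h:ℕ)+1 : ℕ) : ℝ) * θ - θ), -Real.sin ((((h:ℕ)+1 : ℕ) : ℝ) * θ);
          Real.sin ((((h:ℕ)+1 : ℕ) : ℝ) * θ), Real.sin (((((h:ℕ)+1 : ℕ) : ℝ) + 1) * θ)] := by
    rw [show ((((h:ℕ)+1 : ℕ) : ℝ) * θ - θ) = ((((h+1:ℕ)) : ℝ) - 1) * θ by push_cast; ring,
      ← R_pow θ (h+1), inv_smul_smul₀ hs]
  have p0 : (!![0, -1; 1, 2*Real.cos θ] : Matrix (Fin 2) (Fin 2) ℝ) ^ h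
      = (Real.sin θ)⁻¹ • !![-Real.sin (((h : ℕ) : ℝ) * θ - θ), -Real.sin (((h : ℕ) : ℝ) * θ);
          Real.sin (((h : ℕ) : ℝ) * θ), Real.sin ((((h : ℕ) : ℝ) + 1) * θ)] := by
    rw [show (((h:ℕ) : ℝ) * θ - θ) = (((h:ℕ) : ℝ) - 1) * θ by ring,
      ← R_pow θ h, inv_smul_smul₀ hs]
  have q1 : (!![0, -1; 1, -(2*Real.cos θ)] : Matrix (Fin 2) (Fin 2) ℝ) ^ (h+1)
      = (Real.sin θ)⁻¹ • (((-1 : ℝ) ^ (h+1)) •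
        !![-Real.sin ((((h:ℕ)+1 : ℕ) : ℝ) * θ - θ), Real.sin ((((h:ℕ)+1 : ℕ) : ℝ) * θ);
          -Real.sin ((((h:ℕ)+1 : ℕ) : ℝ) * θ), Real.sin (((((h:ℕ)+1 : ℕ) : ℝ) + 1) * θ)]) := by
    rw [show ((((h:ℕ)+1 : ℕ) : ℝ) * θ - θ) = ((((h+1:ℕ)) : ℝ) - 1) * θ by push_cast; ring,
      ← R'_pow θ (h+1), inv_smul_smul₀ hs]
  have q0 : (!![0, -1; 1, -(2*Real.cos θ)] : Matrix (Fin 2) (Fin 2) ℝ) ^ h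
      = (Real.sin θ)⁻¹ • (((-1 : ℝ) ^ h) •
        !![-Real.sin (((h : ℕ) : ℝ) * θ - θ), Real.sin (((h : ℕ) : ℝ) * θ);
          -Real.sin (((h : ℕ) : ℝ) * θ), Real.sin ((((h : ℕ) : ℝ) + 1) * θ)]) := by
    rw [show (((h:ℕ) : ℝ) * θ - θ) = (((h:ℕ) : ℝ) - 1) * θ by ring,
      ← R'_pow θ h, inv_smul_smul₀ hs]
  rw [p1, p0, q1, q0]
  have hsq : ((-1 : ℝ) ^ h) * ((-1 : ℝ) ^ h) = 1 := by
    rw [← pow_add]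
    exact Even.neg_one_pow ⟨h, by ring⟩
  fin_cases i <;>
    (simp only [Matrix.smul_mul, Matrix.mul_smul, smul_smul, Matrix.smul_apply, smul_eq_mul,
        Matrix.mul_apply, Fin.sum_univ_two, Matrix.cons_val', Matrix.cons_val_zero,
        Matrix.cons_val_one, Matrix.head_cons, Matrix.head_fin_const, Matrix.empty_val',
        Matrix.cons_val_fin_one, Matrix.of_apply]
     push_cast
     field_simp
     try rw [show θ * ((h:ℝ)+1-1) = (h:ℝ)*θ by ring]
     rw [show θ * ((h:ℝ)+1+1) = ((h:ℝ)+2)*θ by ring])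
  · linear_combination
        ((2*(2*Real.cos θ)*Real.sin (((h:ℝ)+1)*θ) + 2*Real.sin (((h:ℝ)+1)*θ)
            - 2*Real.sin ((h:ℝ)*θ)) * hkey
          + ((2*Real.cos θ)*Real.sin (((h:ℝ)+1)*θ) + 2*Real.sin (((h:ℝ)+1)*θ)
            - 2*Real.sin ((h:ℝ)*θ)) * hrec
          + ((2*Real.cos θ)*(-(Real.sin (((h:ℝ)+1)*θ)*Real.sin ((h:ℝ)*θ))
              + (2*Real.cos θ)*Real.sin (((h:ℝ)+1)*θ)^2
              + Real.sin (((h:ℝ)+2)*θ)*Real.sin (((h:ℝ)+1)*θ))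
            - (-(Real.sin ((h:ℝ)*θ)^2) + (2*Real.cos θ)*Real.sin ((h:ℝ)*θ)*Real.sin (((h:ℝ)+1)*θ)
              + Real.sin (((h:ℝ)+1)*θ)^2)) * hsq)
  · linear_combination (-(-(Real.sin (((h:ℝ)+1)*θ)*Real.sin ((h:ℝ)*θ))
        - (2*Real.cos θ)*Real.sin (((h:ℝ)+1)*θ)^2
        - Real.sin (((h:ℝ)+2)*θ)*Real.sin (((h:ℝ)+1)*θ)
        + 2*Real.sin (((h:ℝ)+1)*θ)*Real.sin (((h:ℝ)+2)*θ)
        + 4*Real.cos θ*Real.sin (((h:ℝ)+1)*θ)^2) : ℝ) * hsq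

/-- for `q = 2h+3`, the matrices
`T^{a_0} S T^{a_1} ⋯ S T^{a_n} (S T)^h (S T²) (S T)^h` and
`T^{a_0} S T^{a_1} ⋯ S T^{a_n - 1} (S T^{-1})^h (S T^{-2}) (S T^{-1})^h`
have proportional second columns, i.e.
`[a_0; a_1, …, a_n, 1^h, 2, 1^h] = [a_0; a_1, …, a_n - 1, (-1)^h, -2, (-1)^h]`. -/
theorem stmt1 (h q : ℕ) (hq : q = 2 * h + 3) (n : ℕ)
    (a : Fin (n + 1) → ℤ) (ha : ∀ i : Fin (n + 1), i ≠ 0 → a i ≠ 0) :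
    ∃ c : ℝ, c ≠ 0 ∧
      (cfWord q a * ((Smat * Tmat q 1) ^ h * (Smat * Tmat q 2) *
          (Smat * Tmat q 1) ^ h)) 0 1 =
        c * (cfWord q (Function.update a (Fin.last n) (a (Fin.last n) - 1)) *
          ((Smat * Tmat q (-1)) ^ h * (Smat * Tmat q (-2)) *
            (Smat * Tmat q (-1)) ^ h)) 0 1 ∧
      (cfWord q a * ((Smat * Tmat q 1) ^ h * (Smat * Tmat q 2) *
          (Smat * Tmat q 1) ^ h)) 1 1 =
        c * (cfWord q (Function.update a (Fin.last n) (a (Fin.last n) - 1)) *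
          ((Smat * Tmat q (-1)) ^ h * (Smat * Tmat q (-2)) *
            (Smat * Tmat q (-1)) ^ h)) 1 1 := by
  subst hq
  refine ⟨-1, by norm_num, ?_, ?_⟩ <;>
  · rw [cfWord_update_last]
    conv_rhs => rw [mul_assoc]
    rw [Matrix.mul_apply, Matrix.mul_apply, neg_one_mul, ← Finset.sum_neg_distrib]
    refine Finset.sum_congr rfl fun k _ => ?_
    rw [key, mul_neg]
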